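/- For every positive integer k, the number r_k^{MSO;gr} of equivalence classes of finite graphs under ≡_k^{MSO;gr} satisfies r_k^{MSO;gr} ≤ T(k + 2 + log*(k)). -/

import Mathlib

/-- The tower function: `tower 1 = 2` and `tower (s+1) = 2 ^ tower s`. -/
def tower : ℕ → ℕ
  | 0 => 1
  | s + 1 => 2 ^ tower s

/-- `logStar k = min { i | tower i ≥ k }`. -/
noncomputable def logStar (k : ℕ) : ℕ := sInf {i : ℕ | k ≤ tower i}

/-- Monadic second-order formulas of graphs with `n` free vertex variables and
`m` free set variables. -/
inductive MSOForm : ℕ → ℕ → Type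
  | adj {n m : ℕ} : Fin n → Fin n → MSOForm n m
  | eq  {n m : ℕ} : Fin n → Fin n → MSOForm n m
  | mem {n m : ℕ} : Fin n → Fin m → MSOForm n m
  | not {n m : ℕ} : MSOForm n m → MSOForm n m
  | and {n m : ℕ} : MSOForm n m → MSOForm n m → MSOForm n m
  | allV {n m : ℕ} : MSOForm (n + 1) m → MSOForm n m
  | allS {n m : ℕ} : MSOForm n (m + 1) → MSOForm n m

/-- Quantifier depth (counting both kinds of quantifiers) of an MSO formula. -/
def MSOForm.depth : ∀ {n m : ℕ}, MSOForm n m → ℕ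
  | _, _, .adj _ _ => 0
  | _, _, .eq _ _ => 0
  | _, _, .mem _ _ => 0
  | _, _, .not φ => φ.depth
  | _, _, .and φ ψ => max φ.depth ψ.depth
  | _, _, .allV φ => φ.depth + 1
  | _, _, .allS φ => φ.depth + 1

/-- Satisfaction of an MSO formula on a graph under valuations of the vertex
variables and the set variables. -/
def MSOForm.Sat {V : Type} (G : SimpleGraph V) :
    ∀ {n m : ℕ}, MSOForm n m → (Fin n → V) → (Fin m → Set V) → Prop
  | _, _, .adj i j, v, _ => G.Adj (v i) (v j)
  | _, _, .eq i j, v, _ => v i = v j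
  | _, _, .mem i j, v, s => v i ∈ s j
  | _, _, .not φ, v, s => ¬ MSOForm.Sat G φ v s
  | _, _, .and φ ψ, v, s => MSOForm.Sat G φ v s ∧ MSOForm.Sat G ψ v s
  | _, _, .allV φ, v, s => ∀ x : V, MSOForm.Sat G φ (Fin.snoc v x) s
  | _, _, .allS φ, v, s => ∀ X : Set V, MSOForm.Sat G φ v (Fin.snoc s X)

/-- The type of finite graphs (up to the choice of vertex labels `Fin n`). -/
def FinGraph : Type := Σ n : ℕ, SimpleGraph (Fin n)

/-- `G ≡ₖ^{MSO;gr} H`: the graphs satisfy the same MSO sentences of quantifier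
depth at most `k`. -/
def MSOEquiv (k : ℕ) {α β : Type} (G : SimpleGraph α) (H : SimpleGraph β) : Prop :=
  ∀ φ : MSOForm 0 0, φ.depth ≤ k →
    (MSOForm.Sat G φ (fun i => i.elim0) (fun i => i.elim0) ↔
      MSOForm.Sat H φ (fun i => i.elim0) (fun i => i.elim0))

def msoSetoid (k : ℕ) : Setoid FinGraph where
  r G H := MSOEquiv k G.2 H.2
  iseqv := ⟨fun _ _ _ => Iff.rfl, fun h φ hφ => (h φ hφ).symm,
    fun h1 h2 φ hφ => (h1 φ hφ).trans (h2 φ hφ)⟩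

/-- The set of `≡ₖ^{MSO;gr}`-equivalence classes of finite graphs. -/
def MSOGraphClasses (k : ℕ) : Type := Quotient (msoSetoid k)


namespace MSOBound

/-! ### Numeric lemmas about `tower` -/

lemma tower_succ (s : ℕ) : tower (s + 1) = 2 ^ tower s := rfl

lemma tower_pos (s : ℕ) : 0 < tower s := by
  induction s with
  | zero => simp [tower]
  | succ s ih => exact Nat.pow_pos (by norm_num)

lemma tower_mono : Monotone tower := by
  apply monotone_nat_of_le_succ
  intro s
  calc tower s ≤ 2 ^ tower s := Nat.lt_two_pow_self.le
    _ = tower (s + 1) := rfl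

lemma le_tower (n : ℕ) : n ≤ tower n := by
  induction n with
  | zero => exact Nat.zero_le _
  | succ n ih =>
    calc n + 1 ≤ 2 ^ n := Nat.lt_two_pow_self (n := n)
      _ ≤ 2 ^ tower n := Nat.pow_le_pow_right (by norm_num) ih
      _ = tower (n + 1) := rfl

lemma k_le_tower_logStar (k : ℕ) : k ≤ tower (logStar k) :=
  Nat.sInf_mem (⟨k, le_tower k⟩ : {i : ℕ | k ≤ tower i}.Nonempty)

lemma quad_le_pow : ∀ j : ℕ, (j + 1) * j + 2 ≤ 2 ^ (j + 1)
  | 0 => by norm_num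
  | j + 1 => by
    have h1 := quad_le_pow j
    have h2 : j + 1 ≤ 2 ^ j := Nat.lt_two_pow_self (n := j)
    have e1 : 2 ^ (j + 1) = 2 * 2 ^ j := by ring
    have e2 : 2 ^ (j + 2) = 4 * 2 ^ j := by ring
    nlinarith [h1, h2]

lemma t_le_pow_pred {t : ℕ} (ht : 1 ≤ t) : t ≤ 2 ^ (t - 1) := by
  have := Nat.lt_two_pow_self (n := t - 1)
  omega

/-! ### Types (in the model-theoretic sense) of bounded quantifier depth -/

/-- Atomic data describing the relations among `n` vertex variables and `m` set
variables: adjacency and equality for pairs `j < i`, and membership. -/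
def Atom (n m : ℕ) : Type :=
  ((i : Fin n) → Fin i.val → Prop) ×
    (((i : Fin n) → Fin i.val → Prop) × (Fin n → Fin m → Prop))

instance atomFinite (n m : ℕ) : Finite (Atom n m) := by
  unfold Atom; infer_instance

/-- The (abstract) space of depth-`d` types with `n` vertex and `m` set variables. -/
def Typ : ℕ → ℕ → ℕ → Type
  | 0, n, m => Atom n m
  | d + 1, n, m => Atom n m × (Set (Typ d (n + 1) m) × Set (Typ d n (m + 1)))

instance typFinite : ∀ (d n m : ℕ), Finite (Typ d n m)
  | 0, n, m => inferInstanceAs (Finite (Atom n m))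
  | d + 1, n, m =>
    have := typFinite d (n + 1) m
    have := typFinite d n (m + 1)
    inferInstanceAs
      (Finite (Atom n m × (Set (Typ d (n + 1) m) × Set (Typ d n (m + 1)))))

/-- Inclusion `Fin i.val → Fin n` for `i : Fin n`. -/
def idx {n : ℕ} (i : Fin n) (j : Fin i.val) : Fin n := ⟨j.val, j.isLt.trans i.isLt⟩

/-- The atomic type of a tuple of vertices and sets. -/
def atomOf {V : Type} (G : SimpleGraph V) {n m : ℕ} (v : Fin n → V) (s : Fin m → Set V) :
    Atom n m :=
  ⟨fun i j => G.Adj (v (idx i j)) (v i),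
    fun i j => v (idx i j) = v i,
    fun i j => v i ∈ s j⟩

/-- The depth-`d` type of a tuple of vertices and sets in a graph. -/
def typOf {V : Type} (G : SimpleGraph V) :
    (d n m : ℕ) → (Fin n → V) → (Fin m → Set V) → Typ d n m
  | 0, _, _, v, s => atomOf G v s
  | d + 1, n, m, v, s =>
    ⟨atomOf G v s,
      Set.range (fun x : V => typOf G d (n + 1) m (Fin.snoc v x) s),
      Set.range (fun X : Set V => typOf G d n (m + 1) v (Fin.snoc s X))⟩

lemma atom_of_typ_eq {V W : Type} {G : SimpleGraph V} {H : SimpleGraph W} {d n m : ℕ}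
    {v : Fin n → V} {s : Fin m → Set V} {w : Fin n → W} {t : Fin m → Set W}
    (h : typOf G d n m v s = typOf H d n m w t) : atomOf G v s = atomOf H w t := by
  cases d with
  | zero => exact h
  | succ d => exact congrArg Prod.fst h

/-- Key lemma: tuples with equal depth-`d` types satisfy the same formulas of
quantifier depth at most `d`. -/
theorem sat_iff_of_typ_eq {V W : Type} (G : SimpleGraph V) (H : SimpleGraph W) :
    ∀ {n m : ℕ} (φ : MSOForm n m) (d : ℕ), φ.depth ≤ d →
    ∀ (v : Fin n → V) (s : Fin m → Set V) (w : Fin n → W) (t : Fin m → Set W),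
    typOf G d n m v s = typOf H d n m w t →
      (MSOForm.Sat G φ v s ↔ MSOForm.Sat H φ w t) := by
  intro n m φ
  induction φ with
  | @adj n m i j =>
    intro d _ v s w t h
    have ha := congrArg (fun a : Atom n m => a.1) (atom_of_typ_eq h)
    show G.Adj (v i) (v j) ↔ H.Adj (w i) (w j)
    rcases lt_trichotomy i j with hij | hij | hij
    · have h2 := congrFun (congrFun ha j) ⟨i.val, hij⟩
      simp only [atomOf, idx] at h2
      simp only [Fin.eta] at h2
      exact iff_of_eq h2
    · subst hij
      exact iff_of_false (G.irrefl) (H.irrefl)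
    · have h2 := congrFun (congrFun ha i) ⟨j.val, hij⟩
      simp only [atomOf, idx] at h2
      simp only [Fin.eta] at h2
      rw [G.adj_comm, H.adj_comm]
      exact iff_of_eq h2
  | @eq n m i j =>
    intro d _ v s w t h
    have ha := congrArg (fun a : Atom n m => a.2.1) (atom_of_typ_eq h)
    show v i = v j ↔ w i = w j
    rcases lt_trichotomy i j with hij | hij | hij
    · have h2 := congrFun (congrFun ha j) ⟨i.val, hij⟩
      simp only [atomOf, idx] at h2
      simp only [Fin.eta] at h2
      exact iff_of_eq h2
    · subst hij
      exact iff_of_true rfl rfl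
    · have h2 := congrFun (congrFun ha i) ⟨j.val, hij⟩
      simp only [atomOf, idx] at h2
      simp only [Fin.eta] at h2
      rw [eq_comm (a := v i), eq_comm (a := w i)]
      exact iff_of_eq h2
  | @mem n m i j =>
    intro d _ v s w t h
    have ha := congrArg (fun a : Atom n m => a.2.2) (atom_of_typ_eq h)
    have h2 := congrFun (congrFun ha i) j
    exact iff_of_eq h2
  | @not n m φ ih =>
    intro d hd v s w t h
    exact not_congr (ih d hd v s w t h)
  | @and n m φ ψ ihφ ihψ =>
    intro d hd v s w t h
    have h1 : φ.depth ≤ d := le_trans (le_max_left _ _) hd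
    have h2 : ψ.depth ≤ d := le_trans (le_max_right _ _) hd
    exact and_congr (ihφ d h1 v s w t h) (ihψ d h2 v s w t h)
  | @allV n m φ ih =>
    intro d hd v s w t h
    cases d with
    | zero => exact absurd hd (by simp [MSOForm.depth])
    | succ d =>
      have hd' : φ.depth ≤ d := Nat.succ_le_succ_iff.mp hd
      have hr : Set.range (fun x : V => typOf G d (n + 1) m (Fin.snoc v x) s) =
          Set.range (fun y : W => typOf H d (n + 1) m (Fin.snoc w y) t) :=
        congrArg (fun p : Typ (d + 1) n m => p.2.1) h
      constructor
      · intro hall y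
        have hmem : typOf H d (n + 1) m (Fin.snoc w y) t ∈
            Set.range (fun x : V => typOf G d (n + 1) m (Fin.snoc v x) s) := by
          rw [hr]; exact ⟨y, rfl⟩
        obtain ⟨x, hx⟩ := hmem
        exact (ih d hd' (Fin.snoc v x) s (Fin.snoc w y) t hx).mp (hall x)
      · intro hall x
        have hmem : typOf G d (n + 1) m (Fin.snoc v x) s ∈
            Set.range (fun y : W => typOf H d (n + 1) m (Fin.snoc w y) t) := by
          rw [← hr]; exact ⟨x, rfl⟩
        obtain ⟨y, hy⟩ := hmem
        exact (ih d hd' (Fin.snoc v x) s (Fin.snoc w y) t hy.symm).mpr (hall y)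
  | @allS n m φ ih =>
    intro d hd v s w t h
    cases d with
    | zero => exact absurd hd (by simp [MSOForm.depth])
    | succ d =>
      have hd' : φ.depth ≤ d := Nat.succ_le_succ_iff.mp hd
      have hr : Set.range (fun X : Set V => typOf G d n (m + 1) v (Fin.snoc s X)) =
          Set.range (fun Y : Set W => typOf H d n (m + 1) w (Fin.snoc t Y)) :=
        congrArg (fun p : Typ (d + 1) n m => p.2.2) h
      constructor
      · intro hall Y
        have hmem : typOf H d n (m + 1) w (Fin.snoc t Y) ∈
            Set.range (fun X : Set V => typOf G d n (m + 1) v (Fin.snoc s X)) := by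
          rw [hr]; exact ⟨Y, rfl⟩
        obtain ⟨X, hX⟩ := hmem
        exact (ih d hd' v (Fin.snoc s X) w (Fin.snoc t Y) hX).mp (hall X)
      · intro hall X
        have hmem : typOf G d n (m + 1) v (Fin.snoc s X) ∈
            Set.range (fun Y : Set W => typOf H d n (m + 1) w (Fin.snoc t Y)) := by
          rw [← hr]; exact ⟨X, rfl⟩
        obtain ⟨Y, hY⟩ := hmem
        exact (ih d hd' v (Fin.snoc s X) w (Fin.snoc t Y) hY.symm).mpr (hall Y)

/-! ### The surjection from types onto equivalence classes -/

/-- The depth-`k` type of a finite graph. -/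
noncomputable def gType (k : ℕ) (G : FinGraph) : Typ k 0 0 :=
  typOf G.2 k 0 0 (fun i => i.elim0) (fun i => i.elim0)

lemma msoEquiv_of_gType_eq {k : ℕ} {G H : FinGraph} (h : gType k G = gType k H) :
    MSOEquiv k G.2 H.2 :=
  fun φ hφ => sat_iff_of_typ_eq G.2 H.2 φ k hφ _ _ _ _ h

lemma exists_surjection (k : ℕ) :
    ∃ f : Typ k 0 0 → MSOGraphClasses k, Function.Surjective f := by
  classical
  refine ⟨fun ty =>
    if h : ∃ G : FinGraph, gType k G = ty then Quotient.mk (msoSetoid k) h.choose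
    else Quotient.mk (msoSetoid k) ⟨0, ⊥⟩, ?_⟩
  intro c
  induction c using Quotient.ind with
  | _ G =>
    refine ⟨gType k G, ?_⟩
    have hc : ∃ H : FinGraph, gType k H = gType k G := ⟨G, rfl⟩
    show (if h : ∃ H : FinGraph, gType k H = gType k G then
        Quotient.mk (msoSetoid k) h.choose
      else Quotient.mk (msoSetoid k) ⟨0, ⊥⟩) = Quotient.mk (msoSetoid k) G
    rw [dif_pos hc]
    exact Quotient.sound (msoEquiv_of_gType_eq hc.choose_spec)

/-! ### Counting -/

lemma card_prop : Nat.card Prop = 2 := by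
  rw [Nat.card_eq_fintype_card, Fintype.card_prop]

lemma card_set (X : Type) [Finite X] : Nat.card (Set X) = 2 ^ Nat.card X := by
  have : Nat.card (X → Prop) = 2 ^ Nat.card X := by
    rw [Nat.card_fun, card_prop]
  exact this

lemma card_fin_prop (j : ℕ) : Nat.card (Fin j → Prop) = 2 ^ j := by
  rw [Nat.card_fun, card_prop, Nat.card_eq_fintype_card, Fintype.card_fin]

lemma card_pair_table (n : ℕ) :
    Nat.card ((i : Fin n) → Fin i.val → Prop) = 2 ^ (∑ i : Fin n, i.val) := by
  rw [Nat.card_pi]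
  simp only [card_fin_prop]
  rw [Finset.prod_pow_eq_pow_sum]

lemma card_atom (n m : ℕ) :
    Nat.card (Atom n m) = 2 ^ (n * (n - 1) + n * m) := by
  have hsum : (∑ i : Fin n, i.val) * 2 = n * (n - 1) := by
    rw [Fin.sum_univ_eq_sum_range (fun i => i) n]
    exact Finset.sum_range_id_mul_two n
  have hmem : Nat.card (Fin n → Fin m → Prop) = 2 ^ (n * m) := by
    rw [Nat.card_fun, card_fin_prop, Nat.card_eq_fintype_card, Fintype.card_fin,
      ← pow_mul, mul_comm]
  show Nat.card (((i : Fin n) → Fin i.val → Prop) ×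
    (((i : Fin n) → Fin i.val → Prop) × (Fin n → Fin m → Prop))) = _
  have hsum2 : (∑ i : Fin n, i.val) + ((∑ i : Fin n, i.val) + n * m)
      = n * (n - 1) + n * m := by omega
  rw [Nat.card_prod, Nat.card_prod, card_pair_table, hmem, ← pow_add, ← pow_add, hsum2]

lemma card_typ_succ (d n m : ℕ) :
    Nat.card (Typ (d + 1) n m) =
      Nat.card (Atom n m) *
        (2 ^ Nat.card (Typ d (n + 1) m) * 2 ^ Nat.card (Typ d n (m + 1))) := by
  show Nat.card (Atom n m × (Set (Typ d (n + 1) m) × Set (Typ d n (m + 1)))) = _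
  rw [Nat.card_prod, Nat.card_prod, card_set, card_set]

lemma atom_exp_le {k n m : ℕ} (h : n + m ≤ k) : n * (n - 1) + n * m ≤ k * (k - 1) := by
  have : n * (n - 1) + n * m = n * ((n - 1) + m) := by rw [Nat.mul_add]
  rw [this]
  rcases Nat.eq_zero_or_pos n with hn | hn
  · simp [hn]
  · exact Nat.mul_le_mul (by omega) (by omega)

/-- The main counting estimate. -/
lemma card_typ_le (k c : ℕ) (hc : k * (k - 1) + 2 ≤ tower c) :
    ∀ d n m : ℕ, n + m + d ≤ k → 4 * Nat.card (Typ d n m) ≤ tower (d + c + 1) := by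
  have hc1 : 1 ≤ c := by
    rcases Nat.eq_zero_or_pos c with rfl | h
    · have h0 : tower 0 = 1 := rfl
      omega
    · exact h
  intro d
  induction d with
  | zero =>
    intro n m hnm
    have h1 : Nat.card (Typ 0 n m) = 2 ^ (n * (n - 1) + n * m) := card_atom n m
    have h2' : n * (n - 1) + n * m ≤ k * (k - 1) := atom_exp_le (show n + m ≤ k by omega)
    have h2 : n * (n - 1) + n * m + 2 ≤ tower c := by omega
    calc 4 * Nat.card (Typ 0 n m) = 2 ^ (n * (n - 1) + n * m + 2) := by
          rw [h1]; ring
      _ ≤ 2 ^ tower c := Nat.pow_le_pow_right (by norm_num) h2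
      _ = tower (c + 1) := rfl
      _ = tower (0 + c + 1) := by rw [Nat.zero_add]
  | succ d ih =>
    intro n m hnm
    set t := tower (d + c) with ht
    have ht1 : 2 ≤ t := by
      calc 2 = tower 1 := rfl
        _ ≤ tower (d + c) := tower_mono (by omega)
    have hA := ih (n + 1) m (by omega)
    have hB := ih n (m + 1) (by omega)
    set A := Nat.card (Typ d (n + 1) m) with hAdef
    set B := Nat.card (Typ d n (m + 1)) with hBdef
    have htow : tower (d + c + 1) = 2 ^ t := rfl
    have hA' : A ≤ 2 ^ (t - 2) := by
      have h4 : 2 ^ t = 4 * 2 ^ (t - 2) := by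
        have e : t - 2 + 2 = t := by omega
        calc 2 ^ t = 2 ^ (t - 2 + 2) := by rw [e]
          _ = 4 * 2 ^ (t - 2) := by ring
      rw [htow, h4] at hA
      exact Nat.le_of_mul_le_mul_left hA (by norm_num)
    have hB' : B ≤ 2 ^ (t - 2) := by
      have h4 : 2 ^ t = 4 * 2 ^ (t - 2) := by
        have e : t - 2 + 2 = t := by omega
        calc 2 ^ t = 2 ^ (t - 2 + 2) := by rw [e]
          _ = 4 * 2 ^ (t - 2) := by ring
      rw [htow, h4] at hB
      exact Nat.le_of_mul_le_mul_left hB (by norm_num)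
    have haexp : n * (n - 1) + n * m + 2 ≤ t := by
      have h2 : n * (n - 1) + n * m ≤ k * (k - 1) := atom_exp_le (by omega)
      have h3 : k * (k - 1) + 2 ≤ tower c := hc
      have h4 : tower c ≤ t := tower_mono (by omega)
      omega
    -- exponent bound
    have hexp : n * (n - 1) + n * m + 2 + A + B ≤ 2 ^ t := by
      have e1 : 2 ^ (t - 2) + 2 ^ (t - 2) = 2 ^ (t - 1) := by
        rw [← two_mul, ← pow_succ']
        congr 1
        omega
      have e2 : 2 ^ (t - 1) + 2 ^ (t - 1) = 2 ^ t := by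
        rw [← two_mul, ← pow_succ']
        congr 1
        omega
      have e3 : t ≤ 2 ^ (t - 1) := t_le_pow_pred (by omega)
      omega
    calc 4 * Nat.card (Typ (d + 1) n m)
        = 4 * (Nat.card (Atom n m) * (2 ^ A * 2 ^ B)) := by rw [card_typ_succ]
      _ = 2 ^ (n * (n - 1) + n * m + 2 + A + B) := by
          rw [card_atom]
          ring
      _ ≤ 2 ^ 2 ^ t := Nat.pow_le_pow_right (by norm_num) hexp
      _ = tower (d + 1 + c + 1) := by
          have : d + 1 + c = (d + c) + 1 := by omega
          rw [this]
          rfl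

lemma tower_bound (k : ℕ) (hk : 0 < k) :
    k * (k - 1) + 2 ≤ tower (logStar k + 1) := by
  obtain ⟨j, rfl⟩ : ∃ j, k = j + 1 := ⟨k - 1, by omega⟩
  calc (j + 1) * (j + 1 - 1) + 2 = (j + 1) * j + 2 := rfl
    _ ≤ 2 ^ (j + 1) := quad_le_pow j
    _ ≤ 2 ^ tower (logStar (j + 1)) :=
        Nat.pow_le_pow_right (by norm_num) (k_le_tower_logStar (j + 1))
    _ = tower (logStar (j + 1) + 1) := rfl

end MSOBound

/-- for every positive integer `k`, the number of
`≡ₖ^{MSO;gr}`-classes of finite graphs is at most `tower (k + 2 + logStar k)`. -/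
theorem mso_graph_classes_bound (k : ℕ) (hk : 0 < k) :
    Finite (MSOGraphClasses k) ∧
      Nat.card (MSOGraphClasses k) ≤ tower (k + 2 + logStar k) := by
  obtain ⟨f, hf⟩ := MSOBound.exists_surjection k
  have hfin : Finite (MSOGraphClasses k) := Finite.of_surjective f hf
  refine ⟨hfin, ?_⟩
  have h1 : Nat.card (MSOGraphClasses k) ≤ Nat.card (MSOBound.Typ k 0 0) :=
    Nat.card_le_card_of_surjective f hf
  have h2 := MSOBound.card_typ_le k (logStar k + 1) (MSOBound.tower_bound k hk) k 0 0
    (by omega)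
  have h3 : k + (logStar k + 1) + 1 = k + 2 + logStar k := by omega
  rw [h3] at h2
  omega
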